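/- Let D ≥ 2, let T ⊆ ℝ^D be a triangular lattice of degree n with distinct coordinates p_{i,0},…,p_{i,n} in each dimension i, and fix a dimension i and an index m ∈ {0,…,n}. Then the set obtained by taking the points of T whose i-th coordinate equals p_{i,m} and deleting the i-th coordinate from each such point is a triangular lattice of degree n−m in D−1 dimensions. -/
import Mathlib


/-- `T ⊆ ℝ^D` is a triangular lattice of degree `n` in `D` dimensions if for
each dimension there are `n+1` pairwise distinct coordinates `q i 0, …, q i n`
such that `T = {(q_{1,k_1},…,q_{D,k_D}) : k ∈ ℕ^D, ∑ k_i ≤ n}`. -/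
def IsTriangularLattice (D n : ℕ) (T : Set (Fin D → ℝ)) : Prop :=
  ∃ q : Fin D → Fin (n + 1) → ℝ, (∀ i, Function.Injective (q i)) ∧
    T = {x | ∃ k : Fin D → Fin (n + 1), (∑ j, (k j : ℕ)) ≤ n ∧ x = fun j => q j (k j)}

/-- Any `p_{i,m}`-slice of a triangular lattice of degree `n` in `D + 1 ≥ 2`
dimensions, after deleting the `i`-th coordinate, is a triangular lattice of
degree `n − m` in `D` dimensions. -/
theorem slice_isTriangularLattice (D n : ℕ) (hD : 1 ≤ D)
    (p : Fin (D + 1) → Fin (n + 1) → ℝ) (hp : ∀ i, Function.Injective (p i))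
    (T : Set (Fin (D + 1) → ℝ))
    (hT : T = {x | ∃ k : Fin (D + 1) → Fin (n + 1),
        (∑ j, (k j : ℕ)) ≤ n ∧ x = fun j => p j (k j)})
    (i : Fin (D + 1)) (m : Fin (n + 1)) :
    IsTriangularLattice D (n - (m : ℕ))
      {y : Fin D → ℝ | ∃ x ∈ T, x i = p i m ∧ y = i.removeNth x} := by
  have hle : n - (m : ℕ) + 1 ≤ n + 1 := by omega
  refine ⟨fun j t => p (i.succAbove j) (Fin.castLE hle t), ?_, ?_⟩
  · intro j a b hab
    exact Fin.castLE_injective hle (hp _ hab)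
  · ext y
    simp only [Set.mem_setOf_eq]
    constructor
    · rintro ⟨x, hxT, hxi, rfl⟩
      rw [hT] at hxT
      obtain ⟨k, hk, rfl⟩ := hxT
      have hki : k i = m := hp i hxi
      have hterm : ∀ j : Fin D, (k (i.succAbove j) : ℕ) ≤ n - (m : ℕ) := by
        intro j
        have h1 : (k (i.succAbove j) : ℕ) ≤ ∑ l, (k (i.succAbove l) : ℕ) :=
          Finset.single_le_sum (f := fun l => (k (i.succAbove l) : ℕ))
            (fun _ _ => Nat.zero_le _) (Finset.mem_univ j)
        have h2 : (∑ l, (k l : ℕ)) = (k i : ℕ) + ∑ l, (k (i.succAbove l) : ℕ) :=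
          Fin.sum_univ_succAbove _ i
        rw [hki] at h2
        omega
      refine ⟨fun j => ⟨(k (i.succAbove j) : ℕ), by have := hterm j; omega⟩, ?_, ?_⟩
      · have h2 : (∑ l, (k l : ℕ)) = (k i : ℕ) + ∑ l, (k (i.succAbove l) : ℕ) :=
          Fin.sum_univ_succAbove _ i
        rw [hki] at h2
        simp only
        omega
      · funext j
        simp only [Fin.removeNth]
        congr 1
    · rintro ⟨k, hk, rfl⟩
      refine ⟨fun j => p j ((i.insertNth (α := fun _ => Fin (n+1)) m
        (fun l => Fin.castLE hle (k l))) j), ?_, ?_, ?_⟩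
      · rw [hT]
        refine ⟨_, ?_, rfl⟩
        have h2 := Fin.sum_univ_succAbove
          (fun j => ((i.insertNth (α := fun _ => Fin (n+1)) m
            (fun l => Fin.castLE hle (k l))) j : ℕ)) i
        simp only [Fin.insertNth_apply_same, Fin.insertNth_apply_succAbove] at h2
        have hm : (m : ℕ) ≤ n := by omega
        rw [h2]
        simp only [Fin.coe_castLE]
        omega
      · simp
      · funext j
        simp [Fin.removeNth]
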